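/- Let R be an integral domain and let C̃ and C̃' be S-complexes over R. If there exists a morphism of S-complexes from C̃ to C̃', then h(C̃) ≤ h(C̃'). -/

import Mathlib

/-!  S-complexes over a commutative ring `R` (following Daemi–Scaduto).

An S-complex is a ℤ-graded finitely generated free chain complex
`C̃ = C ⊕ C[1] ⊕ R` determined by the data of `C` together with maps
`d, v, δ₁, δ₂`.  We encode the graded module `C` by a single module `Tot`
together with an internal ℤ-grading by submodules, and we carry the sign
map `ε` (multiplication by `(-1)^i` on the degree `i` part) as data. -/

universe u

/-- The data of an S-complex over `R`: a module `Tot` (the total module of the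
ℤ-graded module `C_*`), its grading, the sign map `ε`, and the structure maps
`d : C_* → C_{*-1}`, `v : C_* → C_{*-2}`, `δ₁ : C_* → R` (supported in degree 1),
`δ₂ : R → C_{-2}`. -/
structure SComplexData (R : Type u) [CommRing R] where
  Tot : Type u
  [acg : AddCommGroup Tot]
  [mod : Module R Tot]
  grading : ℤ → Submodule R Tot
  sign : Tot →ₗ[R] Tot
  d : Tot →ₗ[R] Tot
  v : Tot →ₗ[R] Tot
  δ₁ : Tot →ₗ[R] R
  δ₂ : R →ₗ[R] Tot

attribute [instance] SComplexData.acg SComplexData.mod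

namespace SComplexData

variable {R : Type u} [CommRing R]

/-- The axioms making the data of `X : SComplexData R` into a genuine S-complex:
the grading is an internal direct sum decomposition into finitely generated free
pieces, the sign map is `(-1)^i` on the degree `i` piece, the structure maps are
graded of the appropriate degrees (`δ₁` supported on `C_1`, `δ₂` valued in `C_{-2}`),
and the S-complex relations `d∘d = 0`, `δ₁∘d = 0`, `d∘δ₂ = 0`,
`d∘v − v∘d − δ₂∘δ₁ = 0` hold; the latter are equivalent to `d̃ ∘ d̃ = 0` for the
differential `d̃(α, β, r) = (dα, vα − dβ + δ₂ r, δ₁ α)` on `C̃ = C ⊕ C[1] ⊕ R`. -/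
structure IsSComplex (X : SComplexData R) : Prop where
  internal : DirectSum.IsInternal X.grading
  free : ∀ i : ℤ, Module.Free R ↥(X.grading i)
  finite : Module.Finite R X.Tot
  sign_spec : ∀ i : ℤ, ∀ x ∈ X.grading i, X.sign x = if Even i then x else -x
  d_deg : ∀ i : ℤ, (X.grading i).map X.d ≤ X.grading (i - 1)
  v_deg : ∀ i : ℤ, (X.grading i).map X.v ≤ X.grading (i - 2)
  δ₁_deg : ∀ i : ℤ, i ≠ 1 → ∀ x ∈ X.grading i, X.δ₁ x = 0
  δ₂_deg : LinearMap.range X.δ₂ ≤ X.grading (-2)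
  d_d : X.d ∘ₗ X.d = 0
  δ₁_d : X.δ₁ ∘ₗ X.d = 0
  d_δ₂ : X.d ∘ₗ X.δ₂ = 0
  d_v : X.d ∘ₗ X.v - X.v ∘ₗ X.d - X.δ₂ ∘ₗ X.δ₁ = 0

/-- A morphism of S-complexes `λ̃ : C̃ → C̃'`, i.e. a degree-0 chain map
`λ̃(α, β, r) = (λ α, μ α + λ β + Δ₂ r, Δ₁ α + r)`, recorded through its
components `λ, μ, Δ₁, Δ₂` (here `l` stands for `λ`). -/
structure SMorphism (X Y : SComplexData R) where
  l : X.Tot →ₗ[R] Y.Tot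
  μ : X.Tot →ₗ[R] Y.Tot
  Δ₁ : X.Tot →ₗ[R] R
  Δ₂ : R →ₗ[R] Y.Tot
  l_deg : ∀ i : ℤ, (X.grading i).map l ≤ Y.grading i
  μ_deg : ∀ i : ℤ, (X.grading i).map μ ≤ Y.grading (i - 1)
  Δ₁_deg : ∀ i : ℤ, i ≠ 0 → ∀ x ∈ X.grading i, Δ₁ x = 0
  Δ₂_deg : LinearMap.range Δ₂ ≤ Y.grading (-1)
  comm_d : l ∘ₗ X.d = Y.d ∘ₗ l
  comm_δ₁ : Δ₁ ∘ₗ X.d + X.δ₁ = Y.δ₁ ∘ₗ l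
  comm_δ₂ : Y.d ∘ₗ Δ₂ + l ∘ₗ X.δ₂ = Y.δ₂
  comm_v : μ ∘ₗ X.d + Y.d ∘ₗ μ + l ∘ₗ X.v - Y.v ∘ₗ l + Δ₂ ∘ₗ X.δ₁ - Y.δ₂ ∘ₗ Δ₁ = 0

end SComplexData

/-- Functions `ℕ → M` with finitely many nonzero values (i.e. support bounded
above); this realizes the polynomial module `M[x]`. -/
def NatBdd (R : Type u) [CommRing R] (M : Type u) [AddCommGroup M] [Module R M] :
    Submodule R (ℕ → M) where
  carrier := {f | ∃ N : ℕ, ∀ n : ℕ, N < n → f n = 0}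
  add_mem' := by
    rintro f g ⟨N, hN⟩ ⟨K, hK⟩
    refine ⟨max N K, fun n hn => ?_⟩
    have h1 := hN n (lt_of_le_of_lt (le_max_left N K) hn)
    have h2 := hK n (lt_of_le_of_lt (le_max_right N K) hn)
    show f n + g n = 0
    rw [h1, h2, add_zero]
  zero_mem' := ⟨0, fun _ _ => rfl⟩
  smul_mem' := by
    rintro c f ⟨N, hN⟩
    refine ⟨N, fun n hn => ?_⟩
    show c • f n = 0
    rw [hN n hn, smul_zero]

/-- Functions `ℤ → M` with support bounded above; for `M = R` this realizes the
ring `R[[x⁻¹, x]]` of Laurent series with finitely many positive powers of `x`. -/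
def IntBdd (R : Type u) [CommRing R] (M : Type u) [AddCommGroup M] [Module R M] :
    Submodule R (ℤ → M) where
  carrier := {f | ∃ N : ℤ, ∀ n : ℤ, N < n → f n = 0}
  add_mem' := by
    rintro f g ⟨N, hN⟩ ⟨K, hK⟩
    refine ⟨max N K, fun n hn => ?_⟩
    have h1 := hN n (lt_of_le_of_lt (le_max_left N K) hn)
    have h2 := hK n (lt_of_le_of_lt (le_max_right N K) hn)
    show f n + g n = 0
    rw [h1, h2, add_zero]
  zero_mem' := ⟨0, fun _ _ => rfl⟩
  smul_mem' := by
    rintro c f ⟨N, hN⟩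
    refine ⟨N, fun n hn => ?_⟩
    show c • f n = 0
    rw [hN n hn, smul_zero]

/-- The multiplication of `R[[x⁻¹, x]]`, realized as a convolution product on
functions `ℤ → R` with support bounded above. -/
noncomputable def lmul {R : Type u} [CommRing R] (f g : ↥(IntBdd R R)) : ↥(IntBdd R R) :=
  ⟨fun n => ∑ᶠ i : ℤ, f.1 i * g.1 (n - i), by
    obtain ⟨N, hN⟩ := f.2
    obtain ⟨K, hK⟩ := g.2
    refine ⟨N + K, fun n hn => ?_⟩
    apply finsum_eq_zero_of_forall_eq_zero
    intro i
    by_cases h : N < i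
    · rw [hN i h, zero_mul]
    · rw [hK (n - i) (by omega), mul_zero]⟩

namespace SComplexData

variable {R : Type u} [CommRing R]

/-- The carrier of the small equivariant complex `𝔣Ĉ_* = C_{*-1} ⊕ R[x]`,
with `R[x]` realized as finitely supported functions `ℕ → R`. -/
abbrev Small (X : SComplexData R) : Type u := X.Tot × ↥(NatBdd R R)

/-- `Σᵢ vⁱ δ₂(aᵢ)` for a polynomial with coefficients `aᵢ`. -/
noncomputable def sumV (X : SComplexData R) (f : ↥(NatBdd R R)) : X.Tot :=
  ∑ᶠ i : ℕ, (X.v ^ i) (X.δ₂ (f.1 i))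

/-- The differential `𝔡̂(α, Σᵢ aᵢxⁱ) = (dα − Σᵢ vⁱδ₂(aᵢ), 0)` of the small
equivariant complex. -/
noncomputable def smallD (X : SComplexData R) : X.Small → X.Small :=
  fun z => (X.d z.1 - X.sumV z.2, 0)

/-- The `R[x]`-module structure of the small equivariant complex:
`x · (α, p(x)) = (v(α), δ₁(α) + x·p(x))`; this is the action of `x`. -/
noncomputable def xSmall (X : SComplexData R) : X.Small → X.Small :=
  fun z => (X.v z.1, ⟨fun n => if n = 0 then X.δ₁ z.1 else z.2.1 (n - 1), by
    obtain ⟨N, hN⟩ := z.2.2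
    refine ⟨N + 1, fun n hn => ?_⟩
    show (if n = 0 then X.δ₁ z.1 else z.2.1 (n - 1)) = 0
    rw [if_neg (by omega)]
    exact hN (n - 1) (by omega)⟩)

/-- The map `𝔦 : 𝔣Ĉ_* → R[[x⁻¹, x]]`,
`𝔦(α, Σᵢ aᵢxⁱ) = Σ_{i ≤ −1} δ₁v^{−i−1}(α) xⁱ + Σᵢ aᵢxⁱ`. -/
noncomputable def iota (X : SComplexData R) : X.Small → ↥(IntBdd R R) :=
  fun z => ⟨fun n => if n < 0 then X.δ₁ ((X.v ^ (-n - 1).toNat) z.1) else z.2.1 n.toNat, by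
    obtain ⟨N, hN⟩ := z.2.2
    refine ⟨(N : ℤ), fun n hn => ?_⟩
    show (if n < 0 then X.δ₁ ((X.v ^ (-n - 1).toNat) z.1) else z.2.1 n.toNat) = 0
    rw [if_neg (by omega)]
    exact hN n.toNat (by omega)⟩

/-- `𝔍(C̃) = 𝔦(ker 𝔡̂)`, an `R[x]`-submodule of `R[[x⁻¹, x]]`, here recorded
as a set. -/
noncomputable def JJ (X : SComplexData R) : Set ↥(IntBdd R R) :=
  X.iota '' {z | X.smallD z = 0}

/-- `DegEq Q n` means that the Laurent series `Q` is nonzero with `Deg Q = n`,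
i.e. `n` is the largest exponent with nonzero coefficient. -/
def DegEq {R : Type u} [CommRing R] (Q : ↥(IntBdd R R)) (n : ℤ) : Prop :=
  Q.1 n ≠ 0 ∧ ∀ m : ℤ, n < m → Q.1 m = 0

/-- The set of degrees of nonzero elements of `𝔍(C̃)`. -/
noncomputable def degSet (X : SComplexData R) : Set ℤ :=
  {n : ℤ | ∃ Q ∈ X.JJ, DegEq Q n}

/-- The Frøyshov invariant `h(C̃) = −inf {Deg Q : 0 ≠ Q ∈ 𝔍(C̃)}`. -/
noncomputable def hInv (X : SComplexData R) : ℤ := -sInf X.degSet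

/-- The ideal `J_i(C̃) = {a ∈ R : ∃ Q = a·x^{−i} + (lower order terms) ∈ 𝔍(C̃)}`,
recorded as a set. -/
noncomputable def Jideal (X : SComplexData R) (i : ℤ) : Set R :=
  {a : R | ∃ Q ∈ X.JJ, (∀ m : ℤ, -i < m → Q.1 m = 0) ∧ Q.1 (-i) = a}

end SComplexData

namespace SComplexData

variable {R : Type u} [CommRing R]

lemma pow_mem (X : SComplexData R) (hX : X.IsSComplex) {i : ℤ} {x : X.Tot}
    (h : x ∈ X.grading i) : ∀ k : ℕ, (X.v ^ k) x ∈ X.grading (i - 2 * k) := by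
  intro k
  induction k generalizing i x with
  | zero => simpa using h
  | succ k ih =>
      have h1 : X.v x ∈ X.grading (i - 2) := hX.v_deg i (Submodule.mem_map_of_mem h)
      have h2 := ih h1
      have h3 : i - 2 - 2 * (k : ℤ) = i - 2 * ((k + 1 : ℕ) : ℤ) := by push_cast; ring
      rw [pow_succ, Module.End.mul_apply]
      rw [h3] at h2
      exact h2

lemma d_v_apply (X : SComplexData R) (hX : X.IsSComplex) (y : X.Tot) :
    X.d (X.v y) = X.v (X.d y) + X.δ₂ (X.δ₁ y) := by
  have h := LinearMap.ext_iff.mp hX.d_v y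
  simp only [LinearMap.sub_apply, LinearMap.comp_apply, LinearMap.zero_apply] at h
  rw [sub_sub, sub_eq_zero] at h
  exact h

lemma δ₁_d_apply (X : SComplexData R) (hX : X.IsSComplex) (y : X.Tot) :
    X.δ₁ (X.d y) = 0 := by
  have h := LinearMap.ext_iff.mp hX.δ₁_d y
  simpa using h

lemma δ₁_pow_δ₂ (X : SComplexData R) (hX : X.IsSComplex) (m : ℕ) (r : R) :
    X.δ₁ ((X.v ^ m) (X.δ₂ r)) = 0 := by
  have h0 : X.δ₂ r ∈ X.grading (-2) := hX.δ₂_deg ⟨r, rfl⟩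
  exact hX.δ₁_deg _ (by omega) _ (X.pow_mem hX h0 m)

lemma d_pow_δ₂ (X : SComplexData R) (hX : X.IsSComplex) (r : R) :
    ∀ m : ℕ, X.d ((X.v ^ m) (X.δ₂ r)) = 0 := by
  intro m
  induction m with
  | zero =>
      have h := LinearMap.ext_iff.mp hX.d_δ₂ r
      simpa using h
  | succ m ih =>
      rw [pow_succ', Module.End.mul_apply, X.d_v_apply hX, ih, map_zero, zero_add,
        X.δ₁_pow_δ₂ hX m r, map_zero]

lemma exists_pow_zero (X : SComplexData R) (hX : X.IsSComplex) :
    ∃ K : ℕ, ∀ x : X.Tot, (X.v ^ K) x = 0 := by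
  classical
  have htop : ⨆ i, X.grading i = ⊤ := hX.internal.submodule_iSup_eq_top
  have hindep := hX.internal.submodule_iSupIndep
  have hfg : (⊤ : Submodule R X.Tot).FG := Module.finite_def.mp hX.finite
  have hcomp := (Submodule.fg_iff_compact _).mp hfg
  obtain ⟨s, hs⟩ := CompleteLattice.IsCompactElement.exists_finset_of_le_iSup _ hcomp X.grading htop.ge
  have hzero : ∀ j : ℤ, j ∉ s → X.grading j = ⊥ := by
    intro j hj
    refine (hindep j).eq_bot_of_le ?_
    refine le_trans le_top (le_trans hs ?_)
    refine iSup₂_le fun i hi => ?_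
    exact le_iSup₂ (f := fun i (_ : i ≠ j) => X.grading i) i (by rintro rfl; exact hj hi)
  by_cases hne : s.Nonempty
  · set m := s.min' hne with hm
    set M := s.max' hne with hM
    set K : ℕ := (M - m).toNat + 1 with hKdef
    refine ⟨K, ?_⟩
    have hgr : ∀ i : ℤ, ∀ x ∈ X.grading i, (X.v ^ K) x = 0 := by
      intro i x hx
      by_cases hi : i ∈ s
      · have hmem := X.pow_mem hX hx K
        have hnotin : i - 2 * (K : ℤ) ∉ s := by
          intro hcon
          have h1 := s.min'_le _ hcon
          have h2 := s.le_max' _ hi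
          have h3 := s.min'_le _ hi
          rw [← hm] at h1 h3
          rw [← hM] at h2
          have h5 : (K : ℤ) = ((M - m).toNat : ℤ) + 1 := by rw [hKdef]; push_cast; ring
          omega
        rw [hzero _ hnotin, Submodule.mem_bot] at hmem
        exact hmem
      · rw [hzero i hi, Submodule.mem_bot] at hx
        rw [hx, map_zero]
    intro x
    have hx : x ∈ ⨆ i, X.grading i := htop.symm ▸ Submodule.mem_top
    exact Submodule.iSup_induction X.grading (motive := fun y => (X.v ^ K) y = 0) hx hgr
      (map_zero _) (fun a b ha hb => by
        have ha' : (X.v ^ K) a = 0 := ha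
        have hb' : (X.v ^ K) b = 0 := hb
        show (X.v ^ K) (a + b) = 0
        rw [map_add, ha', hb', add_zero])
  · refine ⟨1, fun x => ?_⟩
    rw [Finset.not_nonempty_iff_eq_empty] at hne
    have hx : x ∈ ⨆ i ∈ s, X.grading i := hs Submodule.mem_top
    rw [hne] at hx
    simp only [Finset.notMem_empty, iSup_false, iSup_bot, Submodule.mem_bot] at hx
    rw [hx, map_zero]

end SComplexData
namespace SComplexData

variable {R : Type u} [CommRing R] {A B : SComplexData R}

lemma comm_d_apply (f : SMorphism A B) (y : A.Tot) : f.l (A.d y) = B.d (f.l y) := by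
  have h := LinearMap.ext_iff.mp f.comm_d y
  simpa using h

lemma comm_δ₁_apply (f : SMorphism A B) (y : A.Tot) :
    B.δ₁ (f.l y) = f.Δ₁ (A.d y) + A.δ₁ y := by
  have h := LinearMap.ext_iff.mp f.comm_δ₁ y
  simp only [LinearMap.add_apply, LinearMap.comp_apply] at h
  exact h.symm

lemma comm_δ₂_apply (f : SMorphism A B) (r : R) :
    B.d (f.Δ₂ r) + f.l (A.δ₂ r) = B.δ₂ r := by
  have h := LinearMap.ext_iff.mp f.comm_δ₂ r
  simpa using h

lemma comm_v_apply (f : SMorphism A B) (y : A.Tot) :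
    B.v (f.l y) = f.μ (A.d y) + B.d (f.μ y) + f.l (A.v y) + f.Δ₂ (A.δ₁ y)
      - B.δ₂ (f.Δ₁ y) := by
  have h := LinearMap.ext_iff.mp f.comm_v y
  simp only [LinearMap.sub_apply, LinearMap.add_apply, LinearMap.comp_apply,
    LinearMap.zero_apply] at h
  have h2 : f.μ (A.d y) + B.d (f.μ y) + f.l (A.v y) + f.Δ₂ (A.δ₁ y) - B.δ₂ (f.Δ₁ y)
      - B.v (f.l y) = 0 := by rw [← h]; abel
  have h3 := sub_eq_zero.mp h2
  exact h3.symm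

lemma Δ₁_pow_δ₂ (hA : A.IsSComplex) (f : SMorphism A B) (m : ℕ) (r : R) :
    f.Δ₁ ((A.v ^ m) (A.δ₂ r)) = 0 :=
  f.Δ₁_deg _ (by omega) _ (A.pow_mem hA (hA.δ₂_deg ⟨r, rfl⟩) m)

lemma δ₁_pow_Δ₂ (hB : B.IsSComplex) (f : SMorphism A B) (i : ℕ) (r : R) :
    B.δ₁ ((B.v ^ i) (f.Δ₂ r)) = 0 :=
  hB.δ₁_deg _ (by omega) _ (B.pow_mem hB (f.Δ₂_deg ⟨r, rfl⟩) i)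

lemma δ₁_pow_μ_pow_δ₂ (hA : A.IsSComplex) (hB : B.IsSComplex) (f : SMorphism A B)
    (j m : ℕ) (r : R) : B.δ₁ ((B.v ^ j) (f.μ ((A.v ^ m) (A.δ₂ r)))) = 0 := by
  have h1 : (A.v ^ m) (A.δ₂ r) ∈ A.grading (-2 - 2 * m) :=
    A.pow_mem hA (hA.δ₂_deg ⟨r, rfl⟩) m
  have h2 : f.μ ((A.v ^ m) (A.δ₂ r)) ∈ B.grading (-2 - 2 * m - 1) :=
    f.μ_deg _ (Submodule.mem_map_of_mem h1)
  exact hB.δ₁_deg _ (by omega) _ (B.pow_mem hB h2 j)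

lemma neg_key (hA : A.IsSComplex) (hB : B.IsSComplex) (f : SMorphism A B)
    (α : A.Tot) (K : ℕ) (hdα : A.d α = 0)
    (hlow : ∀ k, k < K → A.δ₁ ((A.v ^ k) α) = 0) :
    ∀ k, k ≤ K → B.δ₁ ((B.v ^ k) (f.l α)) = A.δ₁ ((A.v ^ k) α) := by
  have hdv : ∀ k, k ≤ K → A.d ((A.v ^ k) α) = 0 := by
    intro k
    induction k with
    | zero => intro _; simpa using hdα
    | succ k ih =>
        intro hk
        rw [pow_succ', Module.End.mul_apply, A.d_v_apply hA, ih (by omega), map_zero, zero_add,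
          hlow k (by omega), map_zero]
  set P := Submodule.span R {y : B.Tot | ∃ (j : ℕ) (r : R), y = (B.v ^ j) (B.δ₂ r)} with hP
  have hδ₁P : ∀ y ∈ P, B.δ₁ y = 0 := by
    intro y hy
    induction hy using Submodule.span_induction with
    | mem y h => obtain ⟨j, r, rfl⟩ := h; exact B.δ₁_pow_δ₂ hB j r
    | zero => exact map_zero _
    | add a b _ _ ha hb => rw [map_add, ha, hb, add_zero]
    | smul c a _ ha => rw [map_smul, ha, smul_zero]
  have hvP : ∀ y ∈ P, B.v y ∈ P := by
    intro y hy
    induction hy using Submodule.span_induction with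
    | mem y h =>
        obtain ⟨j, r, rfl⟩ := h
        exact Submodule.subset_span ⟨j + 1, r, by rw [pow_succ', Module.End.mul_apply]⟩
    | zero => rw [map_zero]; exact zero_mem _
    | add a b _ _ ha hb => rw [map_add]; exact add_mem ha hb
    | smul c a _ ha => rw [map_smul]; exact Submodule.smul_mem _ _ ha
  have main : ∀ k, k ≤ K → ∃ ξ : B.Tot, ∃ η ∈ P,
      (B.v ^ k) (f.l α) = f.l ((A.v ^ k) α) + B.d ξ + η := by
    intro k
    induction k with
    | zero => intro _; exact ⟨0, 0, zero_mem _, by simp⟩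
    | succ k ih =>
        intro hk
        obtain ⟨ξ, η, hη, heq⟩ := ih (by omega)
        refine ⟨f.μ ((A.v ^ k) α) + B.v ξ,
          B.v η - B.δ₂ (f.Δ₁ ((A.v ^ k) α)) - B.δ₂ (B.δ₁ ξ), ?_, ?_⟩
        · exact sub_mem (sub_mem (hvP η hη)
            (Submodule.subset_span ⟨0, f.Δ₁ ((A.v ^ k) α), by simp⟩))
            (Submodule.subset_span ⟨0, B.δ₁ ξ, by simp⟩)
        · have hc := comm_v_apply f ((A.v ^ k) α)
          rw [hdv k (by omega), map_zero, zero_add, hlow k (by omega), map_zero, add_zero] at hc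
          have hvd : B.v (B.d ξ) = B.d (B.v ξ) - B.δ₂ (B.δ₁ ξ) := by
            rw [B.d_v_apply hB]; abel
          have hpow : A.v ((A.v ^ k) α) = (A.v ^ (k + 1)) α := by
            rw [pow_succ', Module.End.mul_apply]
          rw [pow_succ', Module.End.mul_apply, heq, map_add, map_add, hc, hvd, hpow, map_add]
          abel
  intro k hk
  obtain ⟨ξ, η, hη, heq⟩ := main k hk
  rw [heq, map_add, map_add, hδ₁P η hη, add_zero, B.δ₁_d_apply hB, add_zero,
    comm_δ₁_apply f, hdv k hk, map_zero, zero_add]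

lemma pos_key (hA : A.IsSComplex) (hB : B.IsSComplex) (f : SMorphism A B) (a : R) :
    ∀ i : ℕ, B.d ((B.v ^ i) (f.Δ₂ a))
      + ∑ j ∈ Finset.range i, B.d ((B.v ^ j) (f.μ ((A.v ^ (i - 1 - j)) (A.δ₂ a))))
      + f.l ((A.v ^ i) (A.δ₂ a)) = (B.v ^ i) (B.δ₂ a) := by
  intro i
  induction i with
  | zero => simpa using comm_δ₂_apply f a
  | succ i ih =>
      have hy : f.l (A.v ((A.v ^ i) (A.δ₂ a)))
          = B.v (f.l ((A.v ^ i) (A.δ₂ a))) - B.d (f.μ ((A.v ^ i) (A.δ₂ a))) := by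
        have hc := comm_v_apply f ((A.v ^ i) (A.δ₂ a))
        rw [A.d_pow_δ₂ hA a i, map_zero, zero_add, A.δ₁_pow_δ₂ hA i a, map_zero, add_zero,
          Δ₁_pow_δ₂ hA f i a, map_zero, sub_zero] at hc
        rw [hc]; abel
      have hterm : ∀ j : ℕ,
          B.d ((B.v ^ (j + 1)) (f.μ ((A.v ^ (i - 1 - j)) (A.δ₂ a))))
            = B.v (B.d ((B.v ^ j) (f.μ ((A.v ^ (i - 1 - j)) (A.δ₂ a))))) := by
        intro j
        rw [pow_succ', Module.End.mul_apply, B.d_v_apply hB,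
          δ₁_pow_μ_pow_δ₂ hA hB f j (i - 1 - j) a, map_zero, add_zero]
      have hhead : B.d ((B.v ^ (i + 1)) (f.Δ₂ a))
          = B.v (B.d ((B.v ^ i) (f.Δ₂ a))) := by
        rw [pow_succ' (B.v), Module.End.mul_apply, B.d_v_apply hB,
          δ₁_pow_Δ₂ hB f i a, map_zero, add_zero]
      have hterm' : ∀ j : ℕ,
          B.d ((B.v ^ (j + 1)) (f.μ ((A.v ^ (i - (j + 1))) (A.δ₂ a))))
            = B.v (B.d ((B.v ^ j) (f.μ ((A.v ^ (i - 1 - j)) (A.δ₂ a))))) := fun j => by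
        rw [show i - (j + 1) = i - 1 - j from by omega]; exact hterm j
      have htail : f.l ((A.v ^ (i + 1)) (A.δ₂ a))
          = B.v (f.l ((A.v ^ i) (A.δ₂ a))) - B.d (f.μ ((A.v ^ i) (A.δ₂ a))) := by
        rw [pow_succ' (A.v), Module.End.mul_apply]; exact hy
      rw [Finset.sum_range_succ', hhead, htail]
      simp only [Nat.add_sub_cancel, Nat.sub_zero]
      simp only [hterm']
      simp only [pow_zero, Module.End.one_apply]
      rw [show (B.v ^ (i + 1)) (B.δ₂ a) = B.v ((B.v ^ i) (B.δ₂ a)) from by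
        rw [pow_succ' (B.v), Module.End.mul_apply]]
      rw [← ih, map_add, map_add, map_sum]
      abel

end SComplexData
namespace SComplexData

variable {R : Type u} [CommRing R]

lemma iota_apply (X : SComplexData R) (z : X.Small) (m : ℤ) :
    (X.iota z).1 m
      = if m < 0 then X.δ₁ ((X.v ^ (-m - 1).toNat) z.1) else z.2.1 m.toNat := rfl

lemma sumV_eq_zero (X : SComplexData R) (p : ↥(NatBdd R R)) (hp : ∀ k : ℕ, p.1 k = 0) :
    X.sumV p = 0 := by
  refine finsum_eq_zero_of_forall_eq_zero fun i => ?_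
  rw [hp i, map_zero, map_zero]

lemma sumV_eq_sum (X : SComplexData R) (p : ↥(NatBdd R R)) (N : ℕ)
    (hp : ∀ k : ℕ, N < k → p.1 k = 0) :
    X.sumV p = ∑ i ∈ Finset.range (N + 1), (X.v ^ i) (X.δ₂ (p.1 i)) := by
  refine finsum_eq_sum_of_support_subset _ fun i hi => ?_
  simp only [Function.mem_support, ne_eq] at hi
  simp only [Finset.coe_range, Set.mem_Iio]
  by_contra hc
  exact hi (by rw [hp i (by omega), map_zero, map_zero])

lemma degSet_nonempty [Nontrivial R] (X : SComplexData R) (hX : X.IsSComplex) :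
    X.degSet.Nonempty := by
  obtain ⟨K, hK⟩ := X.exists_pow_zero hX
  have hmem : ∀ n : ℕ, K < n → (if n = K then (1 : R) else 0) = 0 :=
    fun n hn => if_neg (by omega)
  set pe : ↥(NatBdd R R) := ⟨fun n => if n = K then (1 : R) else 0, ⟨K, hmem⟩⟩ with hpe
  set z : X.Small := ((0 : X.Tot), pe) with hzdef
  have hker : X.smallD z = 0 := by
    have hs : X.sumV pe = 0 := by
      refine finsum_eq_zero_of_forall_eq_zero fun i => ?_
      show (X.v ^ i) (X.δ₂ (if i = K then (1 : R) else 0)) = 0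
      split_ifs with hi
      · subst hi; exact hK _
      · rw [map_zero, map_zero]
    show (X.d 0 - X.sumV pe, (0 : ↥(NatBdd R R))) = 0
    rw [hs, map_zero, sub_zero]
    rfl
  refine ⟨(K : ℤ), X.iota z, Set.mem_image_of_mem _ hker, ?_, ?_⟩
  · have h2 : (X.iota z).1 (K : ℤ) = pe.1 (K : ℤ).toNat := by rw [iota_apply]; exact if_neg (by omega)
    rw [h2]
    show (if (K : ℤ).toNat = K then (1 : R) else 0) ≠ 0
    rw [if_pos (by omega)]
    exact one_ne_zero
  · intro m hm
    have h2 : (X.iota z).1 m = pe.1 m.toNat := by rw [iota_apply]; exact if_neg (by omega)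
    rw [h2]
    show (if m.toNat = K then (1 : R) else 0) = 0
    rw [if_neg (by omega)]

lemma degSet_bddBelow (X : SComplexData R) (hX : X.IsSComplex) : BddBelow X.degSet := by
  obtain ⟨K, hK⟩ := X.exists_pow_zero hX
  refine ⟨-(K : ℤ), fun n hn => ?_⟩
  obtain ⟨Q, hQ, hdeg⟩ := hn
  obtain ⟨z, hz, rfl⟩ := hQ
  by_contra hc
  push_neg at hc
  have h1 : (X.iota z).1 n ≠ 0 := hdeg.1
  have h2 : (X.iota z).1 n = X.δ₁ ((X.v ^ (-n - 1).toNat) z.1) := by rw [iota_apply]; exact if_pos (by omega)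
  have h3 : (X.v ^ (-n - 1).toNat) z.1 = 0 := by
    have hsplit : X.v ^ (-n - 1).toNat = X.v ^ ((-n - 1).toNat - K) * X.v ^ K := by
      rw [← pow_add]
      congr 1
      omega
    rw [hsplit, Module.End.mul_apply, hK, map_zero]
  rw [h2, h3, map_zero] at h1
  exact h1 rfl

variable {A B : SComplexData R}

lemma degSet_subset (hA : A.IsSComplex) (hB : B.IsSComplex) (f : SMorphism A B) :
    A.degSet ⊆ B.degSet := by
  rintro n ⟨Q, hQ, hdeg⟩
  obtain ⟨z, hz, rfl⟩ := hQ
  have hker : A.d z.1 = A.sumV z.2 := by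
    have h1 : A.d z.1 - A.sumV z.2 = 0 := congrArg Prod.fst hz
    exact sub_eq_zero.mp h1
  by_cases hn : n < 0
  · -- negative degree case
    have hp0 : ∀ k : ℕ, z.2.1 k = 0 := by
      intro k
      have h := hdeg.2 (k : ℤ) (by omega)
      have h2 : (A.iota z).1 (k : ℤ) = z.2.1 (k : ℤ).toNat := by rw [iota_apply]; exact if_neg (by omega)
      rw [h2] at h
      simpa using h
    have hdα : A.d z.1 = 0 := by rw [hker, A.sumV_eq_zero _ hp0]
    set K := (-n - 1).toNat with hKdef
    have hlow : ∀ k, k < K → A.δ₁ ((A.v ^ k) z.1) = 0 := by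
      intro k hk
      have h := hdeg.2 (-(k : ℤ) - 1) (by omega)
      have h2 : (A.iota z).1 (-(k : ℤ) - 1)
          = A.δ₁ ((A.v ^ (-(-(k : ℤ) - 1) - 1).toNat) z.1) := by rw [iota_apply]; exact if_pos (by omega)
      rw [h2] at h
      have h3 : (-(-(k : ℤ) - 1) - 1).toNat = k := by omega
      rw [h3] at h
      exact h
    have hkey := neg_key hA hB f z.1 K hdα hlow
    have hker' : B.smallD (f.l z.1, (0 : ↥(NatBdd R R))) = 0 := by
      have h1 : B.d (f.l z.1) = 0 := by rw [← comm_d_apply f, hdα, map_zero]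
      have h2 : B.sumV (0 : ↥(NatBdd R R)) = 0 := B.sumV_eq_zero _ (fun k => rfl)
      show (B.d (f.l z.1) - B.sumV 0, (0 : ↥(NatBdd R R))) = 0
      rw [h1, h2, sub_zero]
      rfl
    refine ⟨B.iota (f.l z.1, (0 : ↥(NatBdd R R))), Set.mem_image_of_mem _ hker', ?_, ?_⟩
    · have h2 : (B.iota (f.l z.1, (0 : ↥(NatBdd R R)))).1 n
          = B.δ₁ ((B.v ^ K) (f.l z.1)) := by rw [iota_apply]; exact if_pos hn
      rw [h2, hkey K (le_refl K)]
      have h4 : (A.iota z).1 n = A.δ₁ ((A.v ^ K) z.1) := by rw [iota_apply]; exact if_pos hn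
      have h5 := hdeg.1
      rw [h4] at h5
      exact h5
    · intro m hm
      by_cases hm0 : m < 0
      · have h2 : (B.iota (f.l z.1, (0 : ↥(NatBdd R R)))).1 m
            = B.δ₁ ((B.v ^ (-m - 1).toNat) (f.l z.1)) := by rw [iota_apply]; exact if_pos hm0
        have hk : (-m - 1).toNat < K := by omega
        rw [h2, hkey _ (le_of_lt hk)]
        exact hlow _ hk
      · have h2 : (B.iota (f.l z.1, (0 : ↥(NatBdd R R)))).1 m
            = (0 : ↥(NatBdd R R)).1 m.toNat := by rw [iota_apply]; exact if_neg hm0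
        rw [h2]
        rfl
  · -- nonnegative degree case
    push_neg at hn
    set N := n.toNat with hNdef
    have hsupp : ∀ k : ℕ, N < k → z.2.1 k = 0 := by
      intro k hk
      have h := hdeg.2 (k : ℤ) (by omega)
      have h2 : (A.iota z).1 (k : ℤ) = z.2.1 (k : ℤ).toNat := by rw [iota_apply]; exact if_neg (by omega)
      rw [h2] at h
      simpa using h
    have hker' : A.d z.1 = ∑ i ∈ Finset.range (N + 1), (A.v ^ i) (A.δ₂ (z.2.1 i)) := by
      rw [hker]; exact A.sumV_eq_sum _ N hsupp
    set α' : B.Tot := f.l z.1 + ∑ i ∈ Finset.range (N + 1),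
        ((B.v ^ i) (f.Δ₂ (z.2.1 i))
          + ∑ j ∈ Finset.range i, (B.v ^ j) (f.μ ((A.v ^ (i - 1 - j)) (A.δ₂ (z.2.1 i))))) with hα'
    have hd' : B.d α' = B.sumV z.2 := by
      rw [hα', map_add, ← comm_d_apply f, hker', map_sum, map_sum,
        B.sumV_eq_sum _ N hsupp, ← Finset.sum_add_distrib]
      refine Finset.sum_congr rfl fun i _ => ?_
      have hpk := pos_key hA hB f (z.2.1 i) i
      rw [map_add, map_sum, ← hpk]
      abel
    have hker'' : B.smallD (α', z.2) = 0 := by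
      show (B.d α' - B.sumV z.2, (0 : ↥(NatBdd R R))) = 0
      rw [hd', sub_self]
      rfl
    refine ⟨B.iota (α', z.2), Set.mem_image_of_mem _ hker'', ?_, ?_⟩
    · have h2 : (B.iota (α', z.2)).1 n = z.2.1 n.toNat := by rw [iota_apply]; exact if_neg (by omega)
      have h3 : (A.iota z).1 n = z.2.1 n.toNat := by rw [iota_apply]; exact if_neg (by omega)
      rw [h2, ← h3]
      exact hdeg.1
    · intro m hm
      have h2 : (B.iota (α', z.2)).1 m = z.2.1 m.toNat := by rw [iota_apply]; exact if_neg (by omega)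
      have h3 : (A.iota z).1 m = z.2.1 m.toNat := by rw [iota_apply]; exact if_neg (by omega)
      rw [h2, ← h3]
      exact hdeg.2 m hm

end SComplexData

open SComplexData in
/-- **Statement 3.** If there is a morphism of S-complexes `C̃ → C̃'` over an
integral domain `R`, then `h(C̃) ≤ h(C̃')`. -/
theorem statement3 {R : Type u} [CommRing R] [IsDomain R]
    (A B : SComplexData R) (hA : A.IsSComplex) (hB : B.IsSComplex)
    (f : SMorphism A B) : A.hInv ≤ B.hInv := by
  have hsub := degSet_subset hA hB f
  have hne := A.degSet_nonempty hA
  have hbdd := B.degSet_bddBelow hB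
  have h := csInf_le_csInf hbdd hne hsub
  simp only [hInv]
  omega
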